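/- arXiv:2506.12271 — 2 statements merged into one kernel-verified Lean document; each statement's English description precedes it below -/
import Mathlib

section
/- Let G be an oriented hypergraph and let N be a head-equivalence class of contributors of G that contains a contributor which is not edge-monic. Then the sum of csgn(c) over all c ∈ N equals 0. -/
open scoped Classical

noncomputable section

/-- An oriented hypergraph `G = (V, E, I, ς, ω, σ)`: `vtx = ς` assigns each incidence
its vertex, `edg = ω` assigns each incidence its edge, and `sgn = σ` is its sign. -/
structure OHG (V E I : Type*) where
  vtx : I → V
  edg : I → E
  sgn : I → ℤˣ

variable {V E I : Type*} [Fintype V] [DecidableEq V] [Fintype E] [DecidableEq E]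
  [Fintype I] [DecidableEq I]

/-- A contributor `c = (t, h)`: each tail sits at its vertex, tail and head of each
`P₁`-map share an edge, and the head map `v ↦ ς (h v)` is a bijection of `V`. -/
def IsContributor (G : OHG V E I) (c : (V → I) × (V → I)) : Prop :=
  (∀ v, G.vtx (c.1 v) = v) ∧ (∀ v, G.edg (c.1 v) = G.edg (c.2 v)) ∧
    Function.Bijective fun v => G.vtx (c.2 v)

/-- The orbit of `v` under iteration of `f` (for `f` a bijection of a finite type this
is the full cycle of `v`). -/
def orbitOf (f : V → V) (v : V) : Finset V :=
  Finset.univ.filter fun w => ∃ n : ℕ, f^[n] v = w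

/-- The set of orbits of `f`. -/
def orbitsOf (f : V → V) : Finset (Finset V) :=
  Finset.univ.image (orbitOf f)

/-- `bs c`: the number of backsteps of a contributor. -/
def bsC (c : (V → I) × (V → I)) : ℕ :=
  (Finset.univ.filter fun v => c.1 v = c.2 v).card

/-- `ec c`: the number of orbits (components) of even cardinality. -/
def ecC (G : OHG V E I) (c : (V → I) × (V → I)) : ℕ :=
  ((orbitsOf fun v => G.vtx (c.2 v)).filter fun O => Even O.card).card

/-- A negative orbit: not a single backstep, and the product of the adjacency signs
`-σ(t_v)·σ(h_v)` over the orbit is `-1`. -/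
def NegOrbit (G : OHG V E I) (c : (V → I) × (V → I)) (O : Finset V) : Prop :=
  (¬ ∃ v, O = {v} ∧ c.1 v = c.2 v) ∧
    ∏ v ∈ O, (-(G.sgn (c.1 v) * G.sgn (c.2 v))) = (-1 : ℤˣ)

/-- `nc c`: the number of negative orbits (components). -/
def ncC (G : OHG V E I) (c : (V → I) × (V → I)) : ℕ :=
  ((orbitsOf fun v => G.vtx (c.2 v)).filter (NegOrbit G c)).card

/-- The contributor sign `csgn c = (-1) ^ (ec c + nc c + bs c)`. -/
def csgnC (G : OHG V E I) (c : (V → I) × (V → I)) : ℤ :=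
  (-1) ^ (ecC G c + ncC G c + bsC c)

/-- A contributor is edge-monic when its tail edges are pairwise distinct. -/
def EdgeMonic (G : OHG V E I) (c : (V → I) × (V → I)) : Prop :=
  Function.Injective fun v => G.edg (c.1 v)

/-- Tail-equivalence: identical tail maps. -/
def TailEquiv (c c' : (V → I) × (V → I)) : Prop := c.1 = c'.1

/-- Head-equivalence: identical sets of head incidences. -/
def HeadEquiv (c c' : (V → I) × (V → I)) : Prop := Set.range c.2 = Set.range c'.2

/-! ### Auxiliary lemmas -/

lemma mem_orbitOf {f : V → V} {v w : V} : w ∈ orbitOf f v ↔ ∃ n : ℕ, f^[n] v = w := by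
  simp [orbitOf]

lemma self_mem_orbitOf (f : V → V) (v : V) : v ∈ orbitOf f v :=
  mem_orbitOf.mpr ⟨0, rfl⟩

lemma orbitOf_mem_orbitsOf (f : V → V) (v : V) : orbitOf f v ∈ orbitsOf f :=
  Finset.mem_image_of_mem _ (Finset.mem_univ v)

lemma mem_orbitsOf {f : V → V} {O : Finset V} : O ∈ orbitsOf f ↔ ∃ v, orbitOf f v = O := by
  simp [orbitsOf, eq_comm]

lemma orbitOf_eq_singleton {f : V → V} {v : V} (h : f v = v) : orbitOf f v = {v} := by
  ext w
  simp only [mem_orbitOf, Finset.mem_singleton]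
  constructor
  · rintro ⟨n, rfl⟩
    exact Function.iterate_fixed h n
  · rintro rfl
    exact ⟨0, rfl⟩

lemma orbitOf_perm (π : Equiv.Perm V) (v : V) :
    orbitOf (⇑π) v = Finset.univ.filter fun w => π.SameCycle v w := by
  ext w
  simp only [mem_orbitOf, Finset.mem_filter, Finset.mem_univ, true_and]
  constructor
  · rintro ⟨n, hn⟩
    exact ⟨(n : ℤ), by rw [zpow_natCast]; exact hn⟩
  · intro h
    obtain ⟨n, _, hn⟩ := h.exists_pow_eq'
    exact ⟨n, hn⟩

lemma orbitOf_eq_of_mem (π : Equiv.Perm V) {v w : V} (h : w ∈ orbitOf (⇑π) v) :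
    orbitOf (⇑π) w = orbitOf (⇑π) v := by
  rw [orbitOf_perm] at h ⊢
  rw [orbitOf_perm]
  have hvw : π.SameCycle v w := by simpa using h
  ext x
  simp only [Finset.mem_filter, Finset.mem_univ, true_and]
  exact ⟨fun h' => hvw.trans h', fun h' => hvw.symm.trans h'⟩

lemma eq_orbitOf_of_mem (π : Equiv.Perm V) {O : Finset V} (hO : O ∈ orbitsOf (⇑π)) {x : V}
    (hx : x ∈ O) : O = orbitOf (⇑π) x := by
  obtain ⟨v, rfl⟩ := mem_orbitsOf.mp hO
  exact (orbitOf_eq_of_mem π hx).symm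

lemma prod_orbitsOf {M : Type*} [CommMonoid M] (π : Equiv.Perm V) (g : V → M) :
    ∏ O ∈ orbitsOf (⇑π), ∏ v ∈ O, g v = ∏ v, g v := by
  have hdisj : ((orbitsOf (⇑π) : Finset (Finset V)) : Set (Finset V)).PairwiseDisjoint id := by
    intro O₁ h₁ O₂ h₂ hne
    refine Finset.disjoint_left.mpr fun x hx₁ hx₂ => hne ?_
    rw [eq_orbitOf_of_mem π h₁ hx₁, eq_orbitOf_of_mem π h₂ hx₂]
  have hcover : (Finset.univ : Finset V) = (orbitsOf (⇑π)).biUnion id := by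
    ext v
    simp only [Finset.mem_univ, Finset.mem_biUnion, id, true_iff]
    exact ⟨orbitOf (⇑π) v, orbitOf_mem_orbitsOf _ v, self_mem_orbitOf _ v⟩
  rw [show (∏ v, g v) = ∏ v ∈ (orbitsOf (⇑π)).biUnion id, g v from by rw [← hcover],
    Finset.prod_biUnion hdisj]
  rfl

lemma support_cycleOf_eq_orbitOf (π : Equiv.Perm V) {x : V} (hx : x ∈ π.support) :
    (π.cycleOf x).support = orbitOf (⇑π) x := by
  rw [orbitOf_perm]
  ext y
  rw [Equiv.Perm.mem_support_cycleOf_iff]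
  simp [hx]

lemma sign_eq_pow_card_even_orbits (π : Equiv.Perm V) :
    Equiv.Perm.sign π =
      (-1 : ℤˣ) ^ ((orbitsOf (⇑π)).filter fun O => Even O.card).card := by
  have h1 : Equiv.Perm.sign π = ∏ g ∈ π.cycleFactorsFinset, Equiv.Perm.sign g := by
    conv_lhs => rw [← Equiv.Perm.cycleFactorsFinset_noncommProd π]
    rw [Finset.map_noncommProd, Finset.noncommProd_eq_prod]
    simp
  have h2 : ∀ g ∈ π.cycleFactorsFinset,
      Equiv.Perm.sign g = if Even g.support.card then (-1 : ℤˣ) else 1 := by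
    intro g hg
    rw [(Equiv.Perm.mem_cycleFactorsFinset_iff.mp hg).1.sign]
    rcases Nat.even_or_odd g.support.card with h | h
    · rw [if_pos h, h.neg_one_pow]
    · rw [if_neg (Nat.not_even_iff_odd.mpr h), h.neg_one_pow, neg_neg]
  rw [h1, Finset.prod_congr rfl h2, ← Finset.prod_filter, Finset.prod_const]
  congr 1
  refine Finset.card_bij (fun g _ => g.support) ?_ ?_ ?_
  · intro g hg
    rw [Finset.mem_filter] at hg ⊢
    obtain ⟨hgF, hgev⟩ := hg
    obtain ⟨x, hx⟩ := (Equiv.Perm.mem_cycleFactorsFinset_iff.mp hgF).1.nonempty_support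
    have hxπ : x ∈ π.support := by
      rw [Equiv.Perm.mem_support,
        ← (Equiv.Perm.mem_cycleFactorsFinset_iff.mp hgF).2 x hx]
      exact Equiv.Perm.mem_support.mp hx
    have hsupp : g.support = orbitOf (⇑π) x := by
      rw [Equiv.Perm.cycle_is_cycleOf hx hgF]
      exact support_cycleOf_eq_orbitOf π hxπ
    refine ⟨?_, hgev⟩
    show g.support ∈ _
    rw [hsupp]
    exact orbitOf_mem_orbitsOf _ x
  · intro g₁ h₁ g₂ h₂ hsupp
    rw [Finset.mem_filter] at h₁ h₂
    have hsupp' : g₁.support = g₂.support := hsupp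
    obtain ⟨x, hx⟩ := (Equiv.Perm.mem_cycleFactorsFinset_iff.mp h₁.1).1.nonempty_support
    rw [Equiv.Perm.cycle_is_cycleOf hx h₁.1,
      Equiv.Perm.cycle_is_cycleOf (hsupp' ▸ hx) h₂.1]
  · intro O hO
    rw [Finset.mem_filter] at hO
    obtain ⟨hOm, hOev⟩ := hO
    obtain ⟨x, rfl⟩ := mem_orbitsOf.mp hOm
    have hx : x ∈ π.support := by
      rw [Equiv.Perm.mem_support]
      intro hfix
      rw [orbitOf_eq_singleton hfix] at hOev
      simp at hOev
    refine ⟨π.cycleOf x, Finset.mem_filter.mpr ⟨?_, ?_⟩, ?_⟩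
    · exact Equiv.Perm.cycleOf_mem_cycleFactorsFinset_iff.mpr hx
    · rwa [support_cycleOf_eq_orbitOf π hx]
    · exact support_cycleOf_eq_orbitOf π hx

lemma csgn_eq (G : OHG V E I) {c : (V → I) × (V → I)} (hc : IsContributor G c) :
    csgnC G c = ((Equiv.Perm.sign (Equiv.ofBijective _ hc.2.2) *
      ∏ v, (-(G.sgn (c.1 v) * G.sgn (c.2 v))) : ℤˣ) : ℤ) := by
  set π : Equiv.Perm V := Equiv.ofBijective _ hc.2.2 with hπ
  have hcoe : ⇑π = fun v => G.vtx (c.2 v) := rfl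
  have hbs : ((orbitsOf (⇑π)).filter fun O => ∃ v, O = {v} ∧ c.1 v = c.2 v).card = bsC c := by
    refine (Finset.card_bij (fun v _ => ({v} : Finset V)) ?_ ?_ ?_).symm
    · intro v hv
      rw [Finset.mem_filter] at hv ⊢
      have hfix : (⇑π) v = v := by
        show G.vtx (c.2 v) = v
        rw [← hv.2, hc.1 v]
      refine ⟨?_, v, rfl, hv.2⟩
      show ({v} : Finset V) ∈ _
      rw [← orbitOf_eq_singleton hfix]
      exact orbitOf_mem_orbitsOf _ v
    · intro v₁ _ v₂ _ h
      exact Finset.singleton_injective h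
    · intro O hO
      rw [Finset.mem_filter] at hO
      obtain ⟨_, v, rfl, hv⟩ := hO
      exact ⟨v, Finset.mem_filter.mpr ⟨Finset.mem_univ v, hv⟩, rfl⟩
  have hncbs : (∏ v, (-(G.sgn (c.1 v) * G.sgn (c.2 v)))) =
      (-1 : ℤˣ) ^ (ncC G c + bsC c) := by
    rw [← prod_orbitsOf π (fun v => -(G.sgn (c.1 v) * G.sgn (c.2 v)))]
    have hP : ∀ O ∈ orbitsOf (⇑π), (∏ v ∈ O, -(G.sgn (c.1 v) * G.sgn (c.2 v))) =
        (if ∃ v, O = {v} ∧ c.1 v = c.2 v then (-1 : ℤˣ) else 1) *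
          (if NegOrbit G c O then (-1 : ℤˣ) else 1) := by
      intro O _
      by_cases hB : ∃ v, O = {v} ∧ c.1 v = c.2 v
      · have hnN : ¬ NegOrbit G c O := fun hN => hN.1 hB
        obtain ⟨v, rfl, hv⟩ := hB
        rw [if_pos ⟨v, rfl, hv⟩, if_neg hnN, Finset.prod_singleton, hv, Int.units_mul_self,
          mul_one]
      · by_cases hN : NegOrbit G c O
        · rw [if_neg hB, if_pos hN, one_mul]
          exact hN.2
        · rw [if_neg hB, if_neg hN, one_mul]
          rcases Int.units_eq_one_or (∏ v ∈ O, -(G.sgn (c.1 v) * G.sgn (c.2 v))) with h | h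
          · exact h
          · exact absurd ⟨hB, h⟩ hN
    rw [Finset.prod_congr rfl hP, Finset.prod_mul_distrib, ← Finset.prod_filter,
      ← Finset.prod_filter, Finset.prod_const, Finset.prod_const, hbs, pow_add]
    rw [mul_comm]
    rfl
  have hec : (-1 : ℤˣ) ^ (ecC G c) = Equiv.Perm.sign π := by
    rw [sign_eq_pow_card_even_orbits π]
    rfl
  have : ((-1 : ℤˣ)) ^ (ecC G c + ncC G c + bsC c) =
      Equiv.Perm.sign π * ∏ v, (-(G.sgn (c.1 v) * G.sgn (c.2 v))) := by
    rw [add_assoc, pow_add, hec, hncbs]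
  rw [csgnC, ← this]
  push_cast
  norm_num

/-- If a head-equivalence class of contributors of an oriented
hypergraph `G` contains a contributor that is not edge-monic, then the sum of `csgn`
over the class is `0`. -/
theorem sum_csgn_headEquiv_class_of_not_edgeMonic (G : OHG V E I)
    (c₀ : (V → I) × (V → I)) (h₀ : IsContributor G c₀) (hne : ¬ EdgeMonic G c₀) :
    ∑ c ∈ Finset.univ.filter (fun c => IsContributor G c ∧ HeadEquiv c c₀),
      csgnC G c = 0 := by
  obtain ⟨a, b, hab, hne'⟩ : ∃ a b, G.edg (c₀.1 a) = G.edg (c₀.1 b) ∧ a ≠ b :=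
    Function.not_injective_iff.mp hne
  set i : I := c₀.2 a with hi
  set j : I := c₀.2 b with hj
  have hςij : G.vtx i ≠ G.vtx j := fun h => hne' (h₀.2.2.injective h)
  have hij : i ≠ j := fun h => hςij (by rw [h])
  have hedg : G.edg i = G.edg j := by
    rw [hi, hj, ← h₀.2.1 a, ← h₀.2.1 b, hab]
  set τ : Equiv.Perm I := Equiv.swap i j with hτ
  have key : ∀ c : (V → I) × (V → I), IsContributor G c → HeadEquiv c c₀ →
      (IsContributor G (c.1, fun v => τ (c.2 v)) ∧ HeadEquiv (c.1, fun v => τ (c.2 v)) c₀) ∧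
        csgnC G (c.1, fun v => τ (c.2 v)) = - csgnC G c := by
    intro c hc hhe
    obtain ⟨a', ha'⟩ : ∃ a', c.2 a' = i := by
      have : i ∈ Set.range c.2 := by rw [hhe]; exact ⟨a, rfl⟩
      exact this
    obtain ⟨b', hb'⟩ : ∃ b', c.2 b' = j := by
      have : j ∈ Set.range c.2 := by rw [hhe]; exact ⟨b, rfl⟩
      exact this
    have hinj2 : Function.Injective c.2 := fun x y hxy =>
      hc.2.2.injective (show G.vtx (c.2 x) = G.vtx (c.2 y) from congrArg G.vtx hxy)
    have hab' : a' ≠ b' := by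
      intro h
      exact hij (by rw [← ha', ← hb', h])
    have hcomp : (fun v => τ (c.2 v)) = fun v => c.2 (Equiv.swap a' b' v) := by
      funext v
      rcases eq_or_ne v a' with rfl | hva
      · rw [ha', Equiv.swap_apply_left, Equiv.swap_apply_left, hb']
      rcases eq_or_ne v b' with rfl | hvb
      · rw [hb', Equiv.swap_apply_right, Equiv.swap_apply_right, ha']
      · have h1 : c.2 v ≠ i := fun h => hva (hinj2 (h.trans ha'.symm))
        have h2 : c.2 v ≠ j := fun h => hvb (hinj2 (h.trans hb'.symm))
        rw [Equiv.swap_apply_of_ne_of_ne h1 h2, Equiv.swap_apply_of_ne_of_ne hva hvb]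
    have hc' : IsContributor G (c.1, fun v => τ (c.2 v)) := by
      refine ⟨hc.1, fun v => ?_, ?_⟩
      · show G.edg (c.1 v) = G.edg (τ (c.2 v))
        rcases eq_or_ne (c.2 v) i with h | h
        · rw [h, Equiv.swap_apply_left, ← hedg, ← h]
          exact hc.2.1 v
        rcases eq_or_ne (c.2 v) j with h2 | h2
        · rw [h2, Equiv.swap_apply_right, hedg, ← h2]
          exact hc.2.1 v
        · rw [Equiv.swap_apply_of_ne_of_ne h h2]
          exact hc.2.1 v
      · show Function.Bijective fun v => G.vtx (τ (c.2 v))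
        have heq : (fun v => G.vtx (τ (c.2 v))) =
            (fun v => G.vtx (c.2 v)) ∘ ⇑(Equiv.swap a' b') :=
          funext fun v => congrArg G.vtx (congrFun hcomp v)
        rw [heq]
        exact hc.2.2.comp (Equiv.swap a' b').bijective
    have hhe' : HeadEquiv (c.1, fun v => τ (c.2 v)) c₀ := by
      show Set.range (fun v => τ (c.2 v)) = Set.range c₀.2
      rw [hcomp, show (fun v => c.2 (Equiv.swap a' b' v)) = c.2 ∘ ⇑(Equiv.swap a' b') from rfl,
        Set.range_comp, Equiv.range_eq_univ, Set.image_univ]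
      exact hhe
    refine ⟨⟨hc', hhe'⟩, ?_⟩
    rw [csgn_eq G hc', csgn_eq G hc]
    have hππ : (Equiv.ofBijective _ hc'.2.2) =
        (Equiv.ofBijective _ hc.2.2) * Equiv.swap a' b' := by
      ext v
      show G.vtx (τ (c.2 v)) = G.vtx (c.2 (Equiv.swap a' b' v))
      rw [congrFun hcomp v]
    have hsg : Equiv.Perm.sign (Equiv.ofBijective _ hc'.2.2) =
        - Equiv.Perm.sign (Equiv.ofBijective _ hc.2.2) := by
      rw [hππ, map_mul, Equiv.Perm.sign_swap hab', mul_neg_one]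
    have hprod : (∏ v, (-(G.sgn ((c.1, fun v => τ (c.2 v)).1 v) *
        G.sgn ((c.1, fun v => τ (c.2 v)).2 v)))) =
        ∏ v, (-(G.sgn (c.1 v) * G.sgn (c.2 v))) := by
      show (∏ v, (-(G.sgn (c.1 v) * G.sgn (τ (c.2 v))))) = _
      rw [show (∏ v, (-(G.sgn (c.1 v) * G.sgn (τ (c.2 v))))) =
        ∏ v, (-(G.sgn (c.1 v) * G.sgn (c.2 (Equiv.swap a' b' v)))) from
        Finset.prod_congr rfl fun v _ => by rw [congrFun hcomp v]]
      calc ∏ v, (-(G.sgn (c.1 v) * G.sgn (c.2 (Equiv.swap a' b' v))))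
          = (∏ v, (-(G.sgn (c.1 v)))) * ∏ v, G.sgn (c.2 (Equiv.swap a' b' v)) := by
            rw [← Finset.prod_mul_distrib]
            exact Finset.prod_congr rfl fun v _ => by rw [neg_mul]
        _ = (∏ v, (-(G.sgn (c.1 v)))) * ∏ v, G.sgn (c.2 v) := by
            rw [Equiv.prod_comp (Equiv.swap a' b') (fun v => G.sgn (c.2 v))]
        _ = ∏ v, (-(G.sgn (c.1 v) * G.sgn (c.2 v))) := by
            rw [← Finset.prod_mul_distrib]
            exact Finset.prod_congr rfl fun v _ => by rw [neg_mul]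
    rw [hprod, hsg, neg_mul, Units.val_neg]
  refine Finset.sum_involution (fun c _ => (c.1, fun v => τ (c.2 v))) ?_ ?_ ?_ ?_
  · intro c hcmem
    rw [Finset.mem_filter] at hcmem
    rw [(key c hcmem.2.1 hcmem.2.2).2]
    ring
  · intro c hcmem _
    rw [Finset.mem_filter] at hcmem
    obtain ⟨a', ha'⟩ : ∃ a', c.2 a' = i := by
      have : i ∈ Set.range c.2 := by rw [hcmem.2.2]; exact ⟨a, rfl⟩
      exact this
    intro hEq
    have h2 := congrFun (congrArg Prod.snd hEq) a'
    simp only at h2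
    rw [ha', Equiv.swap_apply_left] at h2
    exact hij (h2.symm ▸ ha' ▸ rfl)
  · intro c hcmem
    rw [Finset.mem_filter] at hcmem ⊢
    exact ⟨Finset.mem_univ _, (key c hcmem.2.1 hcmem.2.2).1⟩
  · intro c _
    refine Prod.ext rfl ?_
    funext v
    exact Equiv.swap_apply_self i j (c.2 v)
end
end

section
/- (Total-minor Polynomial) Let G be an oriented hypergraph with incidence matrix H and Laplacian L = H·Hᵀ, and let X be the V×V matrix of indeterminates x_{v,w}. Then det(X − L) = Σ_{(U,φ)} ( Σ_{c} csgn(c) ) · Π_{u∈U} x_{u,φ(u)}, where the outer sum runs over all subsets U ⊆ V together with all injections φ: U → V, and the inner sum runs over all nonzero reduced [u,w]-contributors c of G for the injection φ. -/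
open Matrix
open scoped Classical

noncomputable section

variable {V E I : Type*} [Fintype V] [DecidableEq V] [Fintype E] [DecidableEq E]
  [Fintype I] [DecidableEq I]

/-- A (nonzero) reduced `[u,w]`-contributor for the injection `φ : U → V` with image
`W`: a map `c : V∖U → I × I` whose tails sit at their vertices, whose tail and head
share an edge, and whose head map is a bijection from `V∖U` onto `V∖W`. -/
def IsRedCont (G : OHG V E I) (U : Finset V) (φ : {v : V // v ∈ U} ↪ V)
    (c : {v : V // v ∉ U} → I × I) : Prop :=
  (∀ v, G.vtx (c v).1 = v.1) ∧ (∀ v, G.edg (c v).1 = G.edg (c v).2) ∧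
    Set.BijOn (fun v : {v : V // v ∉ U} => G.vtx (c v).2) Set.univ
      {w : V | w ∉ Set.range φ}

/-- The completion `č` of a reduced contributor: the self-map of `V` agreeing with the
head map of `c` on `V∖U` and with `φ` on `U`. -/
def compFun (G : OHG V E I) (U : Finset V) (φ : {v : V // v ∈ U} ↪ V)
    (c : {v : V // v ∉ U} → I × I) : V → V :=
  fun v => if h : v ∈ U then φ ⟨v, h⟩ else G.vtx (c ⟨v, h⟩).2

/-- `ec č`: the number of even cycles of the completion of a reduced contributor. -/
def ecR (G : OHG V E I) (U : Finset V) (φ : {v : V // v ∈ U} ↪ V)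
    (c : {v : V // v ∉ U} → I × I) : ℕ :=
  ((orbitsOf (compFun G U φ c)).filter fun O => Even O.card).card

/-- `bs c`: the number of backsteps of a reduced contributor. -/
def bsR (U : Finset V) (c : {v : V // v ∉ U} → I × I) : ℕ :=
  (Finset.univ.filter fun v : {v : V // v ∉ U} => (c v).1 = (c v).2).card

/-- The arc relation of the digraph on `V` with an arc `v → ς (h_v)` for each
`v ∈ V∖U`. -/
def arcRel (G : OHG V E I) (U : Finset V) (c : {v : V // v ∉ U} → I × I) :
    V → V → Prop :=
  fun a b => ∃ v : {v : V // v ∉ U}, v.1 = a ∧ G.vtx (c v).2 = b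

/-- The connected component of `v` in the digraph of a reduced contributor. -/
def compOf (G : OHG V E I) (U : Finset V) (c : {v : V // v ∉ U} → I × I) (v : V) :
    Finset V :=
  Finset.univ.filter fun w => Relation.EqvGen (arcRel G U c) v w

/-- The components of a reduced contributor. -/
def compsOf (G : OHG V E I) (U : Finset V) (c : {v : V // v ∉ U} → I × I) :
    Finset (Finset V) :=
  Finset.univ.image (compOf G U c)

/-- A negative component: not a single backstep, and the product of the adjacency
signs `-σ(t_v)·σ(h_v)` over the arcs it contains is `-1`. -/
def NegComp (G : OHG V E I) (U : Finset V) (c : {v : V // v ∉ U} → I × I)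
    (O : Finset V) : Prop :=
  (¬ ∃ v : {v : V // v ∉ U}, O = {v.1} ∧ (c v).1 = (c v).2) ∧
    ∏ v ∈ Finset.univ.filter (fun v : {v : V // v ∉ U} => v.1 ∈ O),
      (-(G.sgn (c v).1 * G.sgn (c v).2)) = (-1 : ℤˣ)

/-- `nc c`: the number of negative components of a reduced contributor. -/
def ncR (G : OHG V E I) (U : Finset V) (c : {v : V // v ∉ U} → I × I) : ℕ :=
  ((compsOf G U c).filter (NegComp G U c)).card

/-- The sign `csgn c = (-1) ^ (ec č + nc c + bs c)` of a reduced contributor. -/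
def csgnR (G : OHG V E I) (U : Finset V) (φ : {v : V // v ∈ U} ↪ V)
    (c : {v : V // v ∉ U} → I × I) : ℤ :=
  (-1) ^ (ecR G U φ c + ncR G U c + bsR U c)

/-- A reduced contributor is edge-monic when its tail edges are pairwise distinct. -/
def EdgeMonicR (G : OHG V E I) (U : Finset V) (c : {v : V // v ∉ U} → I × I) : Prop :=
  Function.Injective fun v : {v : V // v ∉ U} => G.edg (c v).1

/-- The incidence matrix of an oriented hypergraph. -/
def incM (G : OHG V E I) : Matrix V E ℤ :=
  Matrix.of fun v e =>
    ∑ i ∈ Finset.univ.filter (fun i => G.vtx i = v ∧ G.edg i = e), (G.sgn i : ℤ)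

/-- The Laplacian `L = H Hᵀ` of an oriented hypergraph. -/
def lapM (G : OHG V E I) : Matrix V V ℤ :=
  incM G * (incM G)ᵀ

set_option linter.unusedSectionVars false

lemma lap_entry (G : OHG V E I) (v w : V) :
    lapM G v w = ∑ p ∈ Finset.univ.filter
        (fun p : I × I => G.vtx p.1 = v ∧ G.edg p.1 = G.edg p.2 ∧ G.vtx p.2 = w),
      ((G.sgn p.1 : ℤ) * (G.sgn p.2 : ℤ)) := by
  classical
  rw [lapM, Matrix.mul_apply, Finset.sum_filter, Fintype.sum_prod_type]
  simp only [incM, Matrix.of_apply, Matrix.transpose_apply, Finset.sum_filter,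
    Finset.sum_mul_sum, ite_mul, zero_mul, mul_ite, mul_zero]
  rw [Finset.sum_comm]
  refine Finset.sum_congr rfl fun i _ => ?_
  rw [Finset.sum_comm]
  refine Finset.sum_congr rfl fun j _ => ?_
  by_cases h1 : G.vtx i = v <;> by_cases h2 : G.vtx j = w <;>
    by_cases h3 : G.edg i = G.edg j <;>
    simp [h1, h2, h3, Finset.sum_ite_eq, Finset.sum_ite_eq']

lemma orbitOf_perm_eq (f : Equiv.Perm V) (v : V) :
    orbitOf ⇑f v = Finset.univ.filter fun w => f.SameCycle v w := by
  ext w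
  simp only [orbitOf, Finset.mem_filter, Finset.mem_univ, true_and]
  constructor
  · rintro ⟨n, rfl⟩
    exact ⟨(n : ℤ), by rw [zpow_natCast, Equiv.Perm.coe_pow]⟩
  · intro h
    obtain ⟨i, _, hi⟩ := h.exists_pow_eq'
    exact ⟨i, by rw [← Equiv.Perm.coe_pow]; exact hi⟩

lemma orbitOf_fixed (f : Equiv.Perm V) {v : V} (hv : f v = v) : orbitOf ⇑f v = {v} := by
  ext w
  simp only [orbitOf, Finset.mem_filter, Finset.mem_univ, true_and, Finset.mem_singleton]
  constructor
  · rintro ⟨n, rfl⟩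
    rw [Function.iterate_fixed hv]
  · rintro rfl; exact ⟨0, rfl⟩

lemma orbitOf_support (f : Equiv.Perm V) {v : V} (hv : f v ≠ v) :
    orbitOf ⇑f v = (f.cycleOf v).support := by
  ext w
  rw [orbitOf_perm_eq, Finset.mem_filter, Equiv.Perm.mem_support_cycleOf_iff]
  simp [Equiv.Perm.mem_support, hv]

lemma neg_one_pow_multiset (m : Multiset ℕ) :
    ((-1 : ℤˣ)) ^ (m.sum + Multiset.card m)
      = (-1) ^ Multiset.card (m.filter (fun n => Even n)) := by
  induction m using Multiset.induction_on with
  | empty => simp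
  | cons a s ih =>
    rw [Multiset.sum_cons, Multiset.card_cons, Multiset.filter_cons]
    rcases Nat.even_or_odd a with h | h
    · rw [if_pos h, Multiset.card_add, Multiset.card_singleton,
        show a + s.sum + (Multiset.card s + 1) = (a + 1) + (s.sum + Multiset.card s) by ring,
        pow_add, pow_add, ih, h.neg_one_pow, pow_one, pow_add, pow_one, one_mul]
    · rw [if_neg (Nat.not_even_iff_odd.mpr h), zero_add,
        show a + s.sum + (Multiset.card s + 1) = (a + 1) + (s.sum + Multiset.card s) by ring,
        pow_add, ih, (Odd.add_one h).neg_one_pow, one_mul]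
lemma sign_eq_even_orbits (f : Equiv.Perm V) :
    Equiv.Perm.sign f
      = (-1 : ℤˣ) ^ (((orbitsOf ⇑f).filter fun O => Even O.card).card) := by
  rw [Equiv.Perm.sign_of_cycleType, neg_one_pow_multiset]
  congr 1
  have h1 : Multiset.card (f.cycleType.filter fun n => Even n)
      = (f.cycleFactorsFinset.filter fun g => Even g.support.card).card := by
    rw [Equiv.Perm.cycleType_def, ← Multiset.countP_eq_card_filter, Multiset.countP_map]
    rfl
  have h2 : ((orbitsOf ⇑f).filter fun O => Even O.card)
      = (f.cycleFactorsFinset.filter fun g => Even g.support.card).image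
          Equiv.Perm.support := by
    ext O
    simp only [Finset.mem_filter, Finset.mem_image, orbitsOf, Finset.mem_image,
      Finset.mem_univ, true_and]
    constructor
    · rintro ⟨⟨v, rfl⟩, hev⟩
      by_cases hv : f v = v
      · rw [orbitOf_fixed f hv] at hev
        simp at hev
      · exact ⟨f.cycleOf v,
          ⟨Equiv.Perm.cycleOf_mem_cycleFactorsFinset_iff.mpr (Equiv.Perm.mem_support.mpr hv),
            by rw [← orbitOf_support f hv]; exact hev⟩,
          (orbitOf_support f hv).symm⟩
    · rintro ⟨g, ⟨hg, hev⟩, rfl⟩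
      have hc := Equiv.Perm.mem_cycleFactorsFinset_iff.mp hg
      obtain ⟨v, hgv, -⟩ := hc.1
      have hvs : v ∈ g.support := Equiv.Perm.mem_support.mpr hgv
      have hfv : f v ≠ v := by
        rw [← hc.2 v hvs]; exact hgv
      have hgeq : g = f.cycleOf v := Equiv.Perm.cycle_is_cycleOf hvs hg
      exact ⟨⟨v, by rw [orbitOf_support f hfv, ← hgeq]⟩, hev⟩
  rw [h1, h2, Finset.card_image_of_injOn]
  intro g1 hg1 g2 hg2 hsupp
  by_contra hne
  have hd : _root_.Disjoint g1.support g2.support :=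
    (f.cycleFactorsFinset_pairwise_disjoint (Finset.mem_filter.mp hg1).1
      (Finset.mem_filter.mp hg2).1 hne).disjoint_support
  rw [hsupp, disjoint_self] at hd
  have := (Equiv.Perm.mem_cycleFactorsFinset_iff.mp (Finset.mem_filter.mp hg2).1).1
  obtain ⟨w, hw, -⟩ := this
  have : w ∈ g2.support := Equiv.Perm.mem_support.mpr hw
  rw [hd] at this
  simp at this
section Comp

variable (G : OHG V E I) (U : Finset V) (c : {v : V // v ∉ U} → I × I)

lemma mem_compOf {v w : V} : w ∈ compOf G U c v ↔ Relation.EqvGen (arcRel G U c) v w := by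
  simp [compOf]

lemma self_mem_compOf (v : V) : v ∈ compOf G U c v :=
  (mem_compOf G U c).mpr (Relation.EqvGen.refl v)

lemma compOf_eq_of_eqvGen {v w : V} (h : Relation.EqvGen (arcRel G U c) v w) :
    compOf G U c v = compOf G U c w := by
  ext x
  simp only [mem_compOf]
  exact ⟨fun hx => (Relation.EqvGen.symm _ _ h).trans _ _ _ hx, fun hx => h.trans _ _ _ hx⟩

lemma mem_compOf_iff_compOf_eq {v w : V} :
    w ∈ compOf G U c v ↔ compOf G U c v = compOf G U c w := by
  constructor
  · intro h
    exact compOf_eq_of_eqvGen G U c ((mem_compOf G U c).mp h)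
  · intro h
    rw [h]
    exact self_mem_compOf G U c w

/-- The component of a backstep is a singleton. -/
lemma compOf_backstep (ht : ∀ v, G.vtx (c v).1 = v.1)
    (hinj : Function.Injective fun v : {v : V // v ∉ U} => G.vtx (c v).2)
    (v : {v : V // v ∉ U}) (hbs : (c v).1 = (c v).2) :
    compOf G U c v.1 = {v.1} := by
  have hself : G.vtx (c v).2 = v.1 := by rw [← hbs, ht]
  have step : ∀ a b : V, arcRel G U c a b → (a = v.1 ↔ b = v.1) := by
    rintro a b ⟨w, rfl, rfl⟩
    constructor
    · intro hw
      have : w = v := Subtype.ext hw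
      rw [this, hself]
    · intro hw
      have : w = v := hinj (show G.vtx (c w).2 = G.vtx (c v).2 by rw [hw, hself])
      rw [this]
  have key : ∀ a b : V, Relation.EqvGen (arcRel G U c) a b → (a = v.1 ↔ b = v.1) := by
    intro a b h
    induction h with
    | rel x y hxy => exact step x y hxy
    | refl x => exact Iff.rfl
    | symm x y _ ih => exact ih.symm
    | trans x y z _ _ ih1 ih2 => exact ih1.trans ih2
  ext w
  rw [mem_compOf, Finset.mem_singleton]
  constructor
  · intro h
    exact (key v.1 w h).mp rfl
  · rintro rfl
    exact Relation.EqvGen.refl _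

/-- Single-backstep component predicate. -/
def SBComp (O : Finset V) : Prop :=
  ∃ v : {v : V // v ∉ U}, O = {v.1} ∧ (c v).1 = (c v).2

lemma comp_prod (ht : ∀ v, G.vtx (c v).1 = v.1)
    (hinj : Function.Injective fun v : {v : V // v ∉ U} => G.vtx (c v).2) :
    (∏ v : {v : V // v ∉ U}, (-(G.sgn (c v).1 * G.sgn (c v).2)))
      = (-1 : ℤˣ) ^ (ncR G U c + bsR U c) := by
  classical
  -- fiberwise decomposition over components
  have hmap : ∀ v : {v : V // v ∉ U}, v ∈ Finset.univ →
      compOf G U c v.1 ∈ compsOf G U c := by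
    intro v _
    exact Finset.mem_image_of_mem _ (Finset.mem_univ _)
  have hfib := Finset.prod_fiberwise_of_maps_to hmap
    (fun v : {v : V // v ∉ U} => (-(G.sgn (c v).1 * G.sgn (c v).2)))
  rw [← hfib]
  -- rewrite each fiber filter to the membership filter
  have hfilter : ∀ O ∈ compsOf G U c,
      (Finset.univ.filter fun v : {v : V // v ∉ U} => compOf G U c v.1 = O)
        = (Finset.univ.filter fun v : {v : V // v ∉ U} => v.1 ∈ O) := by
    intro O hO
    obtain ⟨w, -, rfl⟩ := Finset.mem_image.mp hO
    ext v
    simp only [Finset.mem_filter, Finset.mem_univ, true_and]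
    rw [mem_compOf_iff_compOf_eq]
    exact ⟨fun h => h.symm, fun h => h.symm⟩
  -- each component contributes -1 iff NegComp or single backstep
  have hcomp : ∀ O ∈ compsOf G U c,
      (∏ v ∈ Finset.univ.filter (fun v : {v : V // v ∉ U} => v.1 ∈ O),
        (-(G.sgn (c v).1 * G.sgn (c v).2)))
      = if NegComp G U c O ∨ SBComp U c O then (-1 : ℤˣ) else 1 := by
    intro O hO
    by_cases hsb : SBComp U c O
    · obtain ⟨v, rfl, hbs⟩ := hsb
      have hfil : (Finset.univ.filter fun w : {v : V // v ∉ U} => w.1 ∈ ({v.1} : Finset V))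
          = {v} := by
        ext w
        simp only [Finset.mem_filter, Finset.mem_univ, true_and, Finset.mem_singleton]
        exact ⟨fun h => Subtype.ext h, fun h => by rw [h]⟩
      rw [hfil, Finset.prod_singleton, if_pos (Or.inr ⟨v, rfl, hbs⟩), ← hbs,
        Int.units_mul_self]
    · by_cases hneg : NegComp G U c O
      · rw [if_pos (Or.inl hneg)]
        exact hneg.2
      · rw [if_neg (by tauto)]
        rcases Int.units_eq_one_or (∏ v ∈ Finset.univ.filter
            (fun v : {v : V // v ∉ U} => v.1 ∈ O),
            (-(G.sgn (c v).1 * G.sgn (c v).2))) with h | h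
        · exact h
        · exact absurd ⟨hsb, h⟩ hneg
  rw [Finset.prod_congr rfl fun O hO => by rw [hfilter O hO, hcomp O hO]]
  rw [Finset.prod_ite, Finset.prod_const, Finset.prod_const, one_pow, mul_one]
  congr 1
  -- count: filter (NegComp ∨ SBComp) = ncR + bsR
  rw [Finset.filter_or, Finset.card_union_of_disjoint]
  · have hbs2 : (Finset.filter (SBComp U c) (compsOf G U c)).card = bsR U c := by
      rw [bsR]
      refine (Finset.card_bij (fun (v : {v : V // v ∉ U}) _ => ({v.1} : Finset V))
        ?_ ?_ ?_).symm
      · intro v hv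
        have hbs := (Finset.mem_filter.mp hv).2
        have h1 : ({v.1} : Finset V) ∈ compsOf G U c := by
          rw [← compOf_backstep G U c ht hinj v hbs]
          exact Finset.mem_image_of_mem _ (Finset.mem_univ _)
        exact Finset.mem_filter.mpr ⟨h1, ⟨v, rfl, hbs⟩⟩
      · intro v1 h1 v2 h2 h
        exact Subtype.ext (Finset.singleton_injective h)
      · intro O hO
        obtain ⟨v, hOv, hbs⟩ := (Finset.mem_filter.mp hO).2
        exact ⟨v, Finset.mem_filter.mpr ⟨Finset.mem_univ _, hbs⟩, hOv.symm⟩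
    rw [hbs2]
    rfl
  · rw [Finset.disjoint_left]
    rintro O hO1 hO2
    exact (Finset.mem_filter.mp hO1).2.1 (Finset.mem_filter.mp hO2).2

end Comp
section Key

variable (G : OHG V E I) (U : Finset V) (φ : {v : V // v ∈ U} ↪ V)

/-- Permutations extending `φ`. -/
def fiberSet : Finset (Equiv.Perm V) :=
  Finset.univ.filter fun σ => ∀ u : {v : V // v ∈ U}, σ u.1 = φ u

/-- Incidence-pair choices compatible with `σ`. -/
def pairSet (σ : Equiv.Perm V) : Finset ({v : V // v ∉ U} → I × I) :=
  Fintype.piFinset fun v => Finset.univ.filter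
    (fun p : I × I => G.vtx p.1 = v.1 ∧ G.edg p.1 = G.edg p.2 ∧ G.vtx p.2 = σ v.1)

lemma compFun_bijective {c : {v : V // v ∉ U} → I × I} (hc : IsRedCont G U φ c) :
    Function.Bijective (compFun G U φ c) := by
  obtain ⟨ht, he, hb⟩ := hc
  rw [Fintype.bijective_iff_injective_and_card]
  refine ⟨fun a b hab => ?_, rfl⟩
  unfold compFun at hab
  by_cases ha : a ∈ U <;> by_cases hb' : b ∈ U
  · rw [dif_pos ha, dif_pos hb'] at hab
    exact congrArg Subtype.val (φ.injective hab)
  · rw [dif_pos ha, dif_neg hb'] at hab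
    exact absurd ⟨⟨a, ha⟩, hab⟩ (hb.mapsTo (Set.mem_univ (⟨b, hb'⟩ : {v : V // v ∉ U})))
  · rw [dif_neg ha, dif_pos hb'] at hab
    exact absurd ⟨⟨b, hb'⟩, hab.symm⟩
      (hb.mapsTo (Set.mem_univ (⟨a, ha⟩ : {v : V // v ∉ U})))
  · rw [dif_neg ha, dif_neg hb'] at hab
    exact congrArg Subtype.val
      (hb.injOn (Set.mem_univ (⟨a, ha⟩ : {v : V // v ∉ U})) (Set.mem_univ ⟨b, hb'⟩) hab)

/-- The permutation associated to a reduced contributor. -/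
def contPerm {c : {v : V // v ∉ U} → I × I} (hc : IsRedCont G U φ c) : Equiv.Perm V :=
  Equiv.ofBijective _ (compFun_bijective G U φ hc)

lemma contPerm_coe {c : {v : V // v ∉ U} → I × I} (hc : IsRedCont G U φ c) :
    ⇑(contPerm G U φ hc) = compFun G U φ c := rfl

lemma term_eq (σ : Equiv.Perm V) (hσ : ∀ u : {v : V // v ∈ U}, σ u.1 = φ u)
    (p : {v : V // v ∉ U} → I × I) (hp : p ∈ pairSet G U σ) :
    ((Equiv.Perm.sign σ : ℤ)) *
      ∏ v : {v : V // v ∉ U}, (-((G.sgn (p v).1 : ℤ) * ((G.sgn (p v).2 : ℤ))))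
      = csgnR G U φ p := by
  rw [pairSet, Fintype.mem_piFinset] at hp
  simp only [Finset.mem_filter, Finset.mem_univ, true_and] at hp
  have ht : ∀ v, G.vtx (p v).1 = v.1 := fun v => (hp v).1
  have hhead : ∀ v : {v : V // v ∉ U}, G.vtx (p v).2 = σ v.1 := fun v => (hp v).2.2
  have hfun : compFun G U φ p = ⇑σ := by
    funext v
    by_cases h : v ∈ U
    · rw [compFun, dif_pos h]
      exact (hσ ⟨v, h⟩).symm
    · rw [compFun, dif_neg h]
      exact hhead ⟨v, h⟩
  have hinj : Function.Injective fun v : {v : V // v ∉ U} => G.vtx (p v).2 := by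
    intro a b hab
    simp only [hhead] at hab
    exact Subtype.ext (σ.injective hab)
  have hsign : Equiv.Perm.sign σ = (-1 : ℤˣ) ^ (ecR G U φ p) := by
    rw [sign_eq_even_orbits, ecR, hfun]
  have hprod : (∏ v : {v : V // v ∉ U}, (-((G.sgn (p v).1 : ℤ) * ((G.sgn (p v).2 : ℤ)))))
      = (((-1 : ℤˣ) ^ (ncR G U p + bsR U p) : ℤˣ) : ℤ) := by
    rw [← comp_prod G U p ht hinj]
    push_cast
    rfl
  rw [hsign, hprod, csgnR]
  push_cast
  rw [← pow_add, add_assoc]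

lemma key_sum :
    (∑ σ ∈ fiberSet U φ, ((Equiv.Perm.sign σ : ℤ)) *
      ∏ v : {v : V // v ∉ U}, (-(lapM G v.1 (σ v.1))))
      = ∑ c ∈ Finset.univ.filter
          (fun c : {v : V // v ∉ U} → I × I => IsRedCont G U φ c),
        csgnR G U φ c := by
  classical
  have hL : ∀ σ : Equiv.Perm V,
      (∏ v : {v : V // v ∉ U}, (-(lapM G v.1 (σ v.1))))
        = ∑ p ∈ pairSet G U σ, ∏ v : {v : V // v ∉ U},
            (-((G.sgn (p v).1 : ℤ) * ((G.sgn (p v).2 : ℤ)))) := by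
    intro σ
    rw [pairSet]
    calc (∏ v : {v : V // v ∉ U}, (-(lapM G v.1 (σ v.1))))
        = ∏ v : {v : V // v ∉ U}, ∑ q ∈ Finset.univ.filter
            (fun p : I × I => G.vtx p.1 = v.1 ∧ G.edg p.1 = G.edg p.2 ∧ G.vtx p.2 = σ v.1),
            (-((G.sgn q.1 : ℤ) * ((G.sgn q.2 : ℤ)))) := by
          refine Finset.prod_congr rfl fun v _ => ?_
          rw [lap_entry, ← Finset.sum_neg_distrib]
      _ = _ := Finset.prod_univ_sum _ _
  simp_rw [hL, Finset.mul_sum]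
  rw [Finset.sum_sigma']
  refine Finset.sum_bij' (fun x _ => x.2)
    (fun c hc => ⟨contPerm G U φ (Finset.mem_filter.mp hc).2, c⟩) ?_ ?_ ?_ ?_ ?_
  · -- maps to contributors
    rintro ⟨σ, p⟩ hx
    rw [Finset.mem_sigma] at hx
    obtain ⟨hσ, hp⟩ := hx
    rw [fiberSet, Finset.mem_filter] at hσ
    replace hσ := hσ.2
    rw [pairSet, Fintype.mem_piFinset] at hp
    simp only [Finset.mem_filter, Finset.mem_univ, true_and] at hp
    rw [Finset.mem_filter]
    refine ⟨Finset.mem_univ _, fun v => (hp v).1, fun v => (hp v).2.1, ?_, ?_, ?_⟩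
    · intro a _
      show G.vtx (p a).2 ∈ {w : V | w ∉ Set.range ⇑φ}
      rw [Set.mem_setOf_eq, (hp a).2.2]
      rintro ⟨u, hu⟩
      rw [← hσ u] at hu
      have h1 : (u.1 : V) = a.1 := σ.injective hu
      exact a.2 (h1 ▸ u.2)
    · intro a _ b _ hab
      dsimp only at hab
      rw [(hp a).2.2, (hp b).2.2] at hab
      exact Subtype.ext (σ.injective hab)
    · intro w hw
      have hw' : w ∉ Set.range ⇑φ := hw
      have hwU : σ.symm w ∉ U := fun h => hw'
        ⟨⟨σ.symm w, h⟩, by rw [← hσ ⟨σ.symm w, h⟩]; exact σ.apply_symm_apply w⟩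
      exact ⟨⟨σ.symm w, hwU⟩, Set.mem_univ _, by
        dsimp only
        rw [(hp ⟨σ.symm w, hwU⟩).2.2]
        exact σ.apply_symm_apply w⟩
  · -- inverse maps to sigma set
    intro c hc
    have hcc := (Finset.mem_filter.mp hc).2
    rw [Finset.mem_sigma]
    constructor
    · rw [fiberSet, Finset.mem_filter]
      refine ⟨Finset.mem_univ _, fun u => ?_⟩
      show compFun G U φ c u.1 = φ u
      rw [compFun, dif_pos u.2]
    · rw [pairSet, Fintype.mem_piFinset]
      intro v
      simp only [Finset.mem_filter, Finset.mem_univ, true_and]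
      refine ⟨hcc.1 v, hcc.2.1 v, ?_⟩
      show G.vtx (c v).2 = compFun G U φ c v.1
      rw [compFun, dif_neg v.2]
  · -- left inverse
    rintro ⟨σ, p⟩ hx
    rw [Finset.mem_sigma] at hx
    obtain ⟨hσ, hp⟩ := hx
    rw [fiberSet, Finset.mem_filter] at hσ
    rw [pairSet, Fintype.mem_piFinset] at hp
    simp only [Finset.mem_filter, Finset.mem_univ, true_and] at hp
    have hps : ∀ hc : IsRedCont G U φ p, contPerm G U φ hc = σ := by
      intro hc
      apply Equiv.coe_fn_injective
      show compFun G U φ p = ⇑σ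
      funext v
      by_cases h : v ∈ U
      · rw [compFun, dif_pos h]
        exact (hσ.2 ⟨v, h⟩).symm
      · rw [compFun, dif_neg h]
        exact (hp ⟨v, h⟩).2.2
    show (⟨contPerm G U φ _, p⟩ : Σ _ : Equiv.Perm V, {v : V // v ∉ U} → I × I) = ⟨σ, p⟩
    rw [hps _]
  · -- right inverse
    intro c hc
    rfl
  · -- values
    rintro ⟨σ, p⟩ hx
    rw [Finset.mem_sigma] at hx
    obtain ⟨hσ, hp⟩ := hx
    rw [fiberSet, Finset.mem_filter] at hσ
    exact term_eq G U φ σ hσ.2 p hp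

end Key
/-- **Total-minor Polynomial.** For an oriented hypergraph `G` with
Laplacian `L = H Hᵀ` and matrix of indeterminates `X = (x_{v,w})`,
`det (X - L) = Σ_{(U,φ)} (Σ_c csgn c) Π_{u ∈ U} x_{u, φ u}`, where `(U, φ)` ranges over
all subsets `U ⊆ V` with an injection `φ : U → V`, and `c` ranges over all nonzero
reduced `[u,w]`-contributors of `G` for `φ`. -/
theorem total_minor_polynomial (G : OHG V E I) :
    Matrix.det
        ((Matrix.of fun v w : V => (MvPolynomial.X (v, w) : MvPolynomial (V × V) ℤ)) -
          (lapM G).map fun n : ℤ => (n : MvPolynomial (V × V) ℤ))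
      = ∑ U : Finset V, ∑ φ : {v : V // v ∈ U} ↪ V,
          MvPolynomial.C
              (∑ c ∈ Finset.univ.filter
                  (fun c : {v : V // v ∉ U} → I × I => IsRedCont G U φ c),
                csgnR G U φ c) *
            ∏ u : {v : V // v ∈ U}, MvPolynomial.X (u.1, φ u) := by
  classical
  rw [← Matrix.det_transpose, Matrix.det_apply']
  have hentry : ∀ (σ : Equiv.Perm V) (v : V),
      (((Matrix.of fun v w : V => (MvPolynomial.X (v, w) : MvPolynomial (V × V) ℤ)) -
        (lapM G).map fun n : ℤ => (n : MvPolynomial (V × V) ℤ))ᵀ) (σ v) v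
        = MvPolynomial.X (v, σ v)
          + (-(((lapM G v (σ v) : ℤ)) : MvPolynomial (V × V) ℤ)) := by
    intro σ v
    simp [Matrix.transpose_apply, Matrix.sub_apply, Matrix.map_apply, sub_eq_add_neg]
  simp_rw [hentry, Finset.prod_add, Finset.powerset_univ, Finset.mul_sum]
  rw [Finset.sum_comm]
  refine Finset.sum_congr rfl fun U _ => ?_
  have hrestr : ∀ σ : Equiv.Perm V, Function.Injective
      (fun u : {v : V // v ∈ U} => σ u.1) := by
    intro σ a b h
    exact Subtype.ext (σ.injective h)
  rw [← Finset.sum_fiberwise Finset.univ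
    (fun σ : Equiv.Perm V => (⟨fun u : {v : V // v ∈ U} => σ u.1, hrestr σ⟩ :
      {v : V // v ∈ U} ↪ V))
    (fun σ => ((Equiv.Perm.sign σ : ℤ) : MvPolynomial (V × V) ℤ) *
      ((∏ u ∈ U, MvPolynomial.X (u, σ u)) *
        ∏ v ∈ Finset.univ \ U, (-(((lapM G v (σ v) : ℤ)) : MvPolynomial (V × V) ℤ))))]
  refine Finset.sum_congr rfl fun φ _ => ?_
  have hfil : (Finset.univ.filter fun σ : Equiv.Perm V =>
      (⟨fun u : {v : V // v ∈ U} => σ u.1, hrestr σ⟩ : {v : V // v ∈ U} ↪ V) = φ)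
      = fiberSet U φ := by
    refine Finset.filter_congr fun σ _ => ?_
    constructor
    · intro h u
      rw [← h]
      rfl
    · intro h
      exact Function.Embedding.ext h
  rw [hfil]
  -- per σ in the fiber, rewrite both factors
  have hterm : ∀ σ ∈ fiberSet U φ,
      ((Equiv.Perm.sign σ : ℤ) : MvPolynomial (V × V) ℤ) *
        ((∏ u ∈ U, MvPolynomial.X (u, σ u)) *
          ∏ v ∈ Finset.univ \ U, (-(((lapM G v (σ v) : ℤ)) : MvPolynomial (V × V) ℤ)))
      = (((Equiv.Perm.sign σ : ℤ) : MvPolynomial (V × V) ℤ) *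
          ∏ v : {v : V // v ∉ U}, (-(((lapM G v.1 (σ v.1) : ℤ)) : MvPolynomial (V × V) ℤ)))
        * ∏ u : {v : V // v ∈ U}, MvPolynomial.X (u.1, φ u) := by
    intro σ hσ
    rw [fiberSet, Finset.mem_filter] at hσ
    have h1 : (∏ u ∈ U, (MvPolynomial.X (u, σ u) : MvPolynomial (V × V) ℤ))
        = ∏ u : {v : V // v ∈ U}, MvPolynomial.X (u.1, φ u) := by
      rw [← Finset.prod_coe_sort U (fun u => (MvPolynomial.X (u, σ u) :
        MvPolynomial (V × V) ℤ))]
      exact Finset.prod_congr rfl fun u _ => by rw [hσ.2 u]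
    have h2 : (∏ v ∈ Finset.univ \ U,
          (-(((lapM G v (σ v) : ℤ)) : MvPolynomial (V × V) ℤ)))
        = ∏ v : {v : V // v ∉ U},
            (-(((lapM G v.1 (σ v.1) : ℤ)) : MvPolynomial (V × V) ℤ)) := by
      exact Finset.prod_subtype _ (fun x => by simp) _
    rw [h1, h2]
    ring
  rw [Finset.sum_congr rfl hterm, ← Finset.sum_mul]
  congr 1
  -- now the C-level identity
  rw [← key_sum G U φ, map_sum]
  refine Finset.sum_congr rfl fun σ _ => ?_
  rw [_root_.map_mul, map_prod]
  congr 1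
  · refine Finset.prod_congr rfl fun v _ => ?_
    rw [map_neg]
    exact congrArg Neg.neg (eq_intCast MvPolynomial.C _).symm
end
end
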